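/- arXiv:2204.05012 — 3 statements merged into one kernel-verified Lean document; each statement's English description precedes it below -/
import Mathlib

section
/- Let f be a continuous real-valued function on [0,1]. For integers m and n ≥ 1 put p_{m,n}(x) = C(n,m) x^m (1−x)^{n−m}, where C(n,m) = 0 if m > n or m < 0, and define F_n(x) = Σ_{m=0}^{n} (f(m/n)/(n+1)) Σ_{j=m+1}^{n+1} p_{j,n+1}(x). Then the sequence of polynomials (F_n) converges uniformly on [0,1] to a continuous function F which is differentiable at every point of the open interval (0,1) with F'(x) = f(x) for all x ∈ (0,1). -/
open Set Filter Topology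

/-- `p m n x = C(n,m) x^m (1-x)^{n-m}` (here `Nat.choose n m = 0` when `m > n`). -/
noncomputable def p (m n : ℕ) (x : ℝ) : ℝ :=
  (n.choose m : ℝ) * x ^ m * (1 - x) ^ (n - m)

/-- `F f n x = Σ_{m=0}^{n} (f(m/n)/(n+1)) Σ_{j=m+1}^{n+1} p_{j,n+1}(x)`. -/
noncomputable def F (f : ℝ → ℝ) (n : ℕ) (x : ℝ) : ℝ :=
  ∑ m ∈ Finset.range (n + 1),
    f ((m : ℝ) / (n : ℝ)) / ((n : ℝ) + 1) *
      ∑ j ∈ Finset.Icc (m + 1) (n + 1), p j (n + 1) x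

lemma p_eq_eval (m n : ℕ) (x : ℝ) : p m n x = (bernsteinPolynomial ℝ n m).eval x := by
  simp [p, bernsteinPolynomial]

lemma bp_high (n : ℕ) : bernsteinPolynomial ℝ n (n + 1) = 0 := by
  simp [bernsteinPolynomial, Nat.choose_succ_self]

lemma deriv_Q (m n : ℕ) (hm : m ≤ n) :
    Polynomial.derivative (∑ j ∈ Finset.Icc (m + 1) (n + 1), bernsteinPolynomial ℝ (n + 1) j)
      = (((n : ℕ) + 1 : ℕ) : Polynomial ℝ) * bernsteinPolynomial ℝ n m := by
  have h1 : Finset.Icc (m + 1) (n + 1) = Finset.Ico (m + 1) (n + 2) := by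
    rw [← Finset.Ico_add_one_right_eq_Icc]
    rfl
  rw [h1, map_sum, Finset.sum_Ico_eq_sum_range]
  have h2 : ∀ i ∈ Finset.range (n + 2 - (m + 1)),
      Polynomial.derivative (bernsteinPolynomial ℝ (n + 1) (m + 1 + i)) =
      (((n : ℕ) + 1 : ℕ) : Polynomial ℝ) *
        (bernsteinPolynomial ℝ n (m + i) - bernsteinPolynomial ℝ n (m + i + 1)) := by
    intro i _
    have h3 : m + 1 + i = (m + i) + 1 := by omega
    rw [h3]
    have := bernsteinPolynomial.derivative_succ ℝ (n + 1) (m + i)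
    simpa using this
  rw [Finset.sum_congr rfl h2, ← Finset.mul_sum]
  simp only [add_assoc]
  rw [Finset.sum_range_sub' (fun i => bernsteinPolynomial ℝ n (m + i))]
  have h4 : m + (n + 2 - (m + 1)) = n + 1 := by omega
  rw [h4, bp_high]
  simp

/-- The Bernstein polynomial of `f`, as a bare function. -/
noncomputable def B (f : ℝ → ℝ) (n : ℕ) (x : ℝ) : ℝ :=
  ∑ m ∈ Finset.range (n + 1), f ((m : ℝ) / (n : ℝ)) * p m n x

lemma B_continuous (f : ℝ → ℝ) (n : ℕ) : Continuous (B f n) := by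
  unfold B p
  fun_prop

lemma F_hasDerivAt (f : ℝ → ℝ) (n : ℕ) (x : ℝ) :
    HasDerivAt (F f n) (B f n x) x := by
  have key : ∀ m ∈ Finset.range (n + 1), HasDerivAt
      (fun y => f ((m : ℝ) / (n : ℝ)) / ((n : ℝ) + 1) *
        ∑ j ∈ Finset.Icc (m + 1) (n + 1), p j (n + 1) y)
      (f ((m : ℝ) / (n : ℝ)) * p m n x) x := by
    intro m hm
    have hm' : m ≤ n := by simpa using Nat.lt_succ_iff.mp (Finset.mem_range.mp hm)
    have heq : ∀ y : ℝ, (∑ j ∈ Finset.Icc (m + 1) (n + 1), p j (n + 1) y)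
        = (∑ j ∈ Finset.Icc (m + 1) (n + 1), bernsteinPolynomial ℝ (n + 1) j).eval y := by
      intro y
      rw [Polynomial.eval_finset_sum]
      exact Finset.sum_congr rfl fun j _ => p_eq_eval j (n + 1) y
    have hd := (Polynomial.hasDerivAt
      (∑ j ∈ Finset.Icc (m + 1) (n + 1), bernsteinPolynomial ℝ (n + 1) j) x).const_mul
      (f ((m : ℝ) / (n : ℝ)) / ((n : ℝ) + 1))
    rw [deriv_Q m n hm'] at hd
    simp only [Polynomial.eval_mul, Polynomial.eval_natCast] at hd
    have hrw : f ((m : ℝ) / (n : ℝ)) / ((n : ℝ) + 1) *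
        (((n : ℕ) + 1 : ℕ) * (bernsteinPolynomial ℝ n m).eval x)
        = f ((m : ℝ) / (n : ℝ)) * p m n x := by
      rw [p_eq_eval]
      have : ((n : ℝ) + 1) ≠ 0 := by positivity
      push_cast
      field_simp
    rw [hrw] at hd
    exact hd.congr_of_eventuallyEq (by filter_upwards with y; rw [heq y])
  have := HasDerivAt.sum key
  unfold F B
  exact this.congr_of_eventuallyEq (Filter.Eventually.of_forall fun y => by simp [Finset.sum_apply])

lemma F_zero (f : ℝ → ℝ) (n : ℕ) : F f n 0 = 0 := by
  unfold F
  apply Finset.sum_eq_zero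
  intro m _
  have : ∑ j ∈ Finset.Icc (m + 1) (n + 1), p j (n + 1) (0 : ℝ) = 0 := by
    apply Finset.sum_eq_zero
    intro j hj
    have hj1 : 1 ≤ j := le_trans (Nat.succ_le_succ (Nat.zero_le m)) (Finset.mem_Icc.mp hj).1
    simp [p, zero_pow (by omega : j ≠ 0)]
  rw [this, mul_zero]

lemma F_eq_integral (f : ℝ → ℝ) (n : ℕ) (x : ℝ) :
    F f n x = ∫ t in (0:ℝ)..x, B f n t := by
  have := intervalIntegral.integral_eq_sub_of_hasDerivAt
    (f := F f n) (f' := B f n) (a := 0) (b := x)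
    (fun t _ => F_hasDerivAt f n t)
    ((B_continuous f n).intervalIntegrable 0 x)
  rw [this, F_zero, sub_zero]

open scoped unitInterval in
lemma B_eq_bernstein (f : ℝ → ℝ) (hf : ContinuousOn f (Set.Icc 0 1)) (n : ℕ)
    (x : ℝ) (hx : x ∈ Set.Icc (0:ℝ) 1) :
    B f n x = bernsteinApproximation n ⟨(Set.Icc (0:ℝ) 1).restrict f, hf.restrict⟩ ⟨x, hx⟩ := by
  rw [bernsteinApproximation.apply]
  rw [B, Finset.sum_range fun m => f ((m : ℝ) / (n : ℝ)) * p m n x]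
  apply Finset.sum_congr rfl
  intro k _
  rw [bernstein_apply]
  rw [smul_eq_mul, mul_comm]
  rfl

/-- The polynomials `F n` converge uniformly on `[0,1]` to a continuous function `Flim`
which is differentiable on `(0,1)` with derivative `f`. -/theorem F_tendstoUniformly_primitive (f : ℝ → ℝ) (hf : ContinuousOn f (Set.Icc 0 1)) :
    ∃ Flim : ℝ → ℝ,
      TendstoUniformlyOn (fun n => F f n) Flim atTop (Set.Icc 0 1) ∧
      ContinuousOn Flim (Set.Icc 0 1) ∧
      ∀ x ∈ Set.Ioo (0 : ℝ) 1, HasDerivAt Flim (f x) x := by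
  set f' : C(Set.Icc (0:ℝ) 1, ℝ) := ⟨(Set.Icc (0:ℝ) 1).restrict f, hf.restrict⟩ with hf'
  have hint : ∀ x ∈ Set.Icc (0:ℝ) 1, IntervalIntegrable f MeasureTheory.volume 0 x := by
    intro x hx
    apply ContinuousOn.intervalIntegrable
    apply hf.mono
    rw [Set.uIcc_of_le hx.1]
    exact Set.Icc_subset_Icc_right hx.2
  have h_unif : TendstoUniformlyOn (fun n => F f n) (fun x => ∫ t in (0:ℝ)..x, f t)
      atTop (Set.Icc 0 1) := by
    rw [Metric.tendstoUniformlyOn_iff]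
    intro ε hε
    have hb := bernsteinApproximation_uniform f'
    rw [Metric.tendsto_nhds] at hb
    filter_upwards [hb (ε / 2) (by positivity)] with n hn x hx
    rw [F_eq_integral, Real.dist_eq, ← intervalIntegral.integral_sub (hint x hx)
      ((B_continuous f n).intervalIntegrable 0 x)]
    have hC : 0 ≤ dist (bernsteinApproximation n f') f' := dist_nonneg
    have hbound : ∀ t ∈ Set.uIoc (0:ℝ) x,
        ‖f t - B f n t‖ ≤ dist (bernsteinApproximation n f') f' := by
      intro t ht
      rw [Set.uIoc_of_le hx.1] at ht
      have ht' : t ∈ Set.Icc (0:ℝ) 1 := ⟨le_of_lt ht.1, le_trans ht.2 hx.2⟩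
      rw [B_eq_bernstein f hf n t ht']
      have : f t = f' ⟨t, ht'⟩ := rfl
      rw [this, Real.norm_eq_abs, ← Real.dist_eq, dist_comm]
      exact ContinuousMap.dist_apply_le_dist _
    calc ‖∫ t in (0:ℝ)..x, (f t - B f n t)‖
        ≤ dist (bernsteinApproximation n f') f' * |x - 0| :=
          intervalIntegral.norm_integral_le_of_norm_le_const hbound
      _ ≤ dist (bernsteinApproximation n f') f' * 1 := by
          apply mul_le_mul_of_nonneg_left _ hC
          rw [sub_zero, abs_of_nonneg hx.1]; exact hx.2
      _ < ε := by rw [mul_one]; linarith [hn]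
  refine ⟨fun x => ∫ t in (0:ℝ)..x, f t, h_unif, ?_, ?_⟩
  · apply h_unif.continuousOn
    refine Filter.Eventually.frequently ?_
    filter_upwards with n
    exact (continuous_iff_continuousAt.mpr fun x => (F_hasDerivAt f n x).continuousAt).continuousOn
  · intro x hx
    have hx' : x ∈ Set.Icc (0:ℝ) 1 := Set.Ioo_subset_Icc_self hx
    have hmeas := ContinuousOn.stronglyMeasurableAtFilter (μ := MeasureTheory.volume) isOpen_Ioo (hf.mono Set.Ioo_subset_Icc_self) x hx
    have hcx : ContinuousAt f x := hf.continuousAt (Icc_mem_nhds hx.1 hx.2)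
    exact intervalIntegral.integral_hasDerivAt_right (hint x hx') hmeas hcx
end

section
/- Let f be a continuous real-valued function on [0,1], let ε > 0 and δ > 0 be such that |f(x₁) − f(x₂)| < ε/2 whenever x₁, x₂ ∈ [0,1] and |x₁ − x₂| < δ, and let n be an integer with n > 4‖f‖/(ε δ²), where ‖f‖ = sup_{x ∈ [0,1]} |f(x)|. Then for every x ∈ [0,1], |f(x) − f_n(x)| < ε, where f_n(x) = Σ_{m=0}^{n} f(m/n) p_{m,n}(x) is the n-th Bernstein polynomial of f and p_{m,n}(x) = C(n,m) x^m (1−x)^{n−m}. -/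
/-- Quantitative Bernstein approximation: if `|f x₁ - f x₂| < ε/2` whenever
`|x₁ - x₂| < δ` on `[0,1]`, and `n > 4‖f‖/(ε δ²)`, then `|f x - f_n x| < ε` on `[0,1]`. -/
theorem bernstein_approx (f : ℝ → ℝ) (hf : ContinuousOn f (Set.Icc 0 1))
    (ε δ : ℝ) (hε : 0 < ε) (hδ : 0 < δ)
    (hmod : ∀ x₁ ∈ Set.Icc (0 : ℝ) 1, ∀ x₂ ∈ Set.Icc (0 : ℝ) 1,
      |x₁ - x₂| < δ → |f x₁ - f x₂| < ε / 2)
    (n : ℕ) (hn : (n : ℝ) > 4 * (⨆ x : Set.Icc (0 : ℝ) 1, |f x|) / (ε * δ ^ 2)) :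
    ∀ x ∈ Set.Icc (0 : ℝ) 1,
      |f x - ∑ m ∈ Finset.range (n + 1),
        f ((m : ℝ) / (n : ℝ)) * ((n.choose m : ℝ) * x ^ m * (1 - x) ^ (n - m))| < ε := by
  intro x hx
  set M : ℝ := ⨆ x : Set.Icc (0 : ℝ) 1, |f x| with hMdef
  have hbdd : BddAbove (Set.range fun y : Set.Icc (0:ℝ) 1 => |f y|) := by
    have h1 : ContinuousOn (fun y => |f y|) (Set.Icc (0:ℝ) 1) := hf.abs
    have h2 := (isCompact_Icc.image_of_continuousOn h1).bddAbove
    rwa [show (fun y : Set.Icc (0:ℝ) 1 => |f ↑y|) = (fun y => |f y|) ∘ Subtype.val from rfl,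
      Set.range_comp, Subtype.range_coe]
  have hMle : ∀ y ∈ Set.Icc (0:ℝ) 1, |f y| ≤ M := fun y hy => le_ciSup hbdd ⟨y, hy⟩
  have hM0 : 0 ≤ M := le_trans (abs_nonneg (f 0)) (hMle 0 (by norm_num))
  have hεδ : 0 < ε * δ ^ 2 := by positivity
  have hnpos : (0:ℝ) < n := lt_of_le_of_lt (by positivity) hn
  have hA : 4 * M < (n:ℝ) * (ε * δ ^ 2) := by
    rw [gt_iff_lt, div_lt_iff₀ hεδ] at hn
    linarith
  have hx0 : (0:ℝ) ≤ x := hx.1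
  have hx1 : x ≤ 1 := hx.2
  set P : ℕ → ℝ := fun m => (n.choose m : ℝ) * x ^ m * (1 - x) ^ (n - m) with hPdef
  have hPnn : ∀ m, 0 ≤ P m := by
    intro m
    have h1x : (0:ℝ) ≤ 1 - x := by linarith
    simp only [hPdef]
    positivity
  have hsum : ∑ m ∈ Finset.range (n+1), P m = 1 := by
    have h1 := congrArg (Polynomial.eval x) (bernsteinPolynomial.sum ℝ n)
    simpa [bernsteinPolynomial, Polynomial.eval_finset_sum, hPdef] using h1
  have hvar : ∑ m ∈ Finset.range (n+1), (x - (m:ℝ)/n)^2 * P m = x * (1-x) / n := by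
    have h1 : ∑ k : Fin (n+1), (x - (k:ℝ)/n)^2 * P k = x*(1-x)/n := by
      simpa [bernstein.z, bernstein_apply, hPdef] using bernstein.variance (n := n) (Nat.cast_pos.mp hnpos).ne' ⟨x, hx⟩
    rw [← Fin.sum_univ_eq_sum_range (fun m => (x - (m:ℝ)/n)^2 * P m) (n+1)]
    exact h1
  have hkey : ∀ m ∈ Finset.range (n+1),
      |f x - f ((m:ℝ)/n)| ≤ ε/2 + (2*M/δ^2) * (x - (m:ℝ)/n)^2 := by
    intro m hm
    have hmn : (m:ℝ)/n ∈ Set.Icc (0:ℝ) 1 := by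
      have hmle : (m:ℝ) ≤ n := by
        exact_mod_cast Nat.lt_succ_iff.mp (Finset.mem_range.mp hm)
      constructor
      · positivity
      · rw [div_le_one hnpos]; exact hmle
    by_cases h : |x - (m:ℝ)/n| < δ
    · have := hmod x hx _ hmn h
      have hnn : 0 ≤ (2*M/δ^2) * (x - (m:ℝ)/n)^2 := by positivity
      linarith
    · push_neg at h
      have hsq : δ^2 ≤ (x - (m:ℝ)/n)^2 := by
        rw [← sq_abs (x - (m:ℝ)/n)]
        exact pow_le_pow_left₀ hδ.le h 2
      have hb : |f x - f ((m:ℝ)/n)| ≤ 2 * M := by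
        calc |f x - f ((m:ℝ)/n)| ≤ |f x| + |f ((m:ℝ)/n)| := abs_sub _ _
          _ ≤ M + M := add_le_add (hMle x hx) (hMle _ hmn)
          _ = 2 * M := by ring
      have hδ2 : (0:ℝ) < δ^2 := by positivity
      have h2 : 2 * M ≤ (2*M/δ^2) * (x - (m:ℝ)/n)^2 := by
        rw [div_mul_eq_mul_div, le_div_iff₀ hδ2]
        nlinarith
      linarith
  have hmain : |f x - ∑ m ∈ Finset.range (n + 1), f ((m : ℝ) / n) * P m|
      ≤ ε/2 + (2*M/δ^2) * (x * (1-x) / n) := by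
    have heq : f x - ∑ m ∈ Finset.range (n + 1), f ((m : ℝ) / n) * P m
        = ∑ m ∈ Finset.range (n + 1), (f x - f ((m : ℝ) / n)) * P m := by
      simp_rw [sub_mul, Finset.sum_sub_distrib, ← Finset.mul_sum, hsum, mul_one]
    rw [heq]
    calc |∑ m ∈ Finset.range (n + 1), (f x - f ((m : ℝ) / n)) * P m|
        ≤ ∑ m ∈ Finset.range (n + 1), |f x - f ((m : ℝ) / n)| * P m := by
          refine (Finset.abs_sum_le_sum_abs _ _).trans ?_
          refine Finset.sum_le_sum fun m _ => ?_
          rw [abs_mul, abs_of_nonneg (hPnn m)]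
      _ ≤ ∑ m ∈ Finset.range (n + 1), (ε/2 + (2*M/δ^2) * (x - (m:ℝ)/n)^2) * P m := by
          refine Finset.sum_le_sum fun m hm => ?_
          exact mul_le_mul_of_nonneg_right (hkey m hm) (hPnn m)
      _ = ε/2 * ∑ m ∈ Finset.range (n+1), P m
          + (2*M/δ^2) * ∑ m ∈ Finset.range (n+1), (x - (m:ℝ)/n)^2 * P m := by
          rw [Finset.mul_sum, Finset.mul_sum, ← Finset.sum_add_distrib]
          refine Finset.sum_congr rfl fun m _ => ?_
          ring
      _ = ε/2 + (2*M/δ^2) * (x * (1-x) / n) := by rw [hsum, hvar, mul_one]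
  have hfinal : (2*M/δ^2) * (x * (1-x) / n) < ε/2 := by
    have hδ2 : (0:ℝ) < δ^2 := by positivity
    rw [div_mul_div_comm, div_lt_div_iff₀ (by positivity) two_pos]
    have hq : x * (1-x) ≤ 1/4 := by nlinarith [sq_nonneg (x - 1/2)]
    nlinarith [mul_nonneg hM0 (by nlinarith [sq_nonneg (x - 1/2)] : (0:ℝ) ≤ 1/4 - x * (1-x))]
  calc |f x - ∑ m ∈ Finset.range (n + 1),
        f ((m : ℝ) / (n : ℝ)) * ((n.choose m : ℝ) * x ^ m * (1 - x) ^ (n - m))|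
      = |f x - ∑ m ∈ Finset.range (n + 1), f ((m : ℝ) / n) * P m| := rfl
    _ ≤ ε/2 + (2*M/δ^2) * (x * (1-x) / n) := hmain
    _ < ε := by linarith
end

section
/- Let f be a continuous real-valued function on [0,1], and for n ≥ 1 let f_n be its n-th Bernstein polynomial and F_n the polynomial with F_n(0) = 0 and F_n' = f_n. Fix c ∈ (0,1), and for each n let Q_n be the polynomial obtained by dividing F_n(x) − F_n(c) by x − c, so that F_n(x) − F_n(c) = Q_n(x)(x − c) for all x and Q_n(c) = F_n'(c) = f_n(c). Then for all m, n ≥ 1, sup_{x ∈ [0,1]} |Q_m(x) − Q_n(x)| ≤ sup_{x ∈ [0,1]} |f_m(x) − f_n(x)|. -/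
/-- The `n`-th Bernstein polynomial of `f`. -/
noncomputable def bern (f : ℝ → ℝ) (n : ℕ) (x : ℝ) : ℝ :=
  ∑ m ∈ Finset.range (n + 1),
    f ((m : ℝ) / (n : ℝ)) * ((n.choose m : ℝ) * x ^ m * (1 - x) ^ (n - m))

/-- The primitive `F_n` of the `n`-th Bernstein polynomial of `f` vanishing at `0`. -/
noncomputable def FF (f : ℝ → ℝ) (n : ℕ) (x : ℝ) : ℝ :=
  ∑ m ∈ Finset.range (n + 1),
    f ((m : ℝ) / (n : ℝ)) / ((n : ℝ) + 1) *
      ∑ j ∈ Finset.Icc (m + 1) (n + 1),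
        ((n + 1).choose j : ℝ) * x ^ j * (1 - x) ^ (n + 1 - j)


private noncomputable def bb (n j : ℕ) (x : ℝ) : ℝ :=
  ((n : ℝ) + 1) * (n.choose j : ℝ) * x ^ j * (1 - x) ^ (n - j)

lemma hasDerivAt_term (n j : ℕ) (hj : 1 ≤ j) (x : ℝ) :
    HasDerivAt (fun y : ℝ => ((n + 1).choose j : ℝ) * y ^ j * (1 - y) ^ (n + 1 - j))
      (bb n (j - 1) x - bb n j x) x := by
  have h1 : HasDerivAt (fun y : ℝ => (1 - y)) (-1) x := by
    simpa using (hasDerivAt_id x).const_sub 1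
  have h2 : HasDerivAt (fun y : ℝ => (1 - y) ^ (n + 1 - j))
      (((n + 1 - j : ℕ) : ℝ) * (1 - x) ^ (n + 1 - j - 1) * (-1)) x := h1.pow _
  have h3 : HasDerivAt (fun y : ℝ => y ^ j) ((j : ℝ) * x ^ (j - 1)) x := hasDerivAt_pow _ _
  have h4 := (h3.fun_mul h2).const_mul (((n + 1).choose j : ℝ))
  simp only [← mul_assoc] at h4
  refine h4.congr_deriv (Eq.symm ?_)
  obtain ⟨k, rfl⟩ := Nat.exists_eq_succ_of_ne_zero (by omega : j ≠ 0)
  have hs : n - (k + 1) = n - k - 1 := by omega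
  simp only [Nat.succ_eq_add_one, bb, Nat.add_sub_cancel, Nat.add_sub_add_right, hs]
  have e1 : ((n : ℝ) + 1) * (n.choose k : ℝ) = ((n + 1).choose (k + 1) : ℝ) * ((k : ℝ) + 1) := by
    exact_mod_cast congrArg (Nat.cast (R := ℝ)) (Nat.add_one_mul_choose_eq n k)
  have e2n : (n + 1) * n.choose (k + 1) = (n - k) * (n + 1).choose (k + 1) := by
    have hsub : n + 1 - (k + 1) = n - k := by omega
    rw [Nat.add_one_mul_choose_eq, Nat.choose_succ_right_eq, hsub, Nat.mul_comm]
  have e2 : ((n : ℝ) + 1) * (n.choose (k + 1) : ℝ) =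
      ((n - k : ℕ) : ℝ) * ((n + 1).choose (k + 1) : ℝ) := by exact_mod_cast congrArg (Nat.cast (R := ℝ)) e2n
  push_cast at e1 e2 ⊢
  linear_combination (x ^ k * (1 - x) ^ (n - k)) * e1 - (x ^ (k + 1) * (1 - x) ^ (n - k - 1)) * e2

lemma hasDerivAt_inner (n m : ℕ) (hm : m ≤ n) (x : ℝ) :
    HasDerivAt (fun y : ℝ => ∑ j ∈ Finset.Icc (m + 1) (n + 1),
        ((n + 1).choose j : ℝ) * y ^ j * (1 - y) ^ (n + 1 - j))
      (bb n m x) x := by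
  have h := HasDerivAt.fun_sum (u := Finset.Icc (m + 1) (n + 1))
    (fun j hj => hasDerivAt_term n j (by simp at hj; omega) x)
  have hsum : ∑ j ∈ Finset.Icc (m + 1) (n + 1), (bb n (j - 1) x - bb n j x) = bb n m x := by
    rw [← Finset.Ico_add_one_right_eq_Icc, Finset.sum_Ico_eq_sum_range]
    have hlen : n + 1 + 1 - (m + 1) = n + 1 - m := by omega
    rw [hlen]
    have : ∀ i ∈ Finset.range (n + 1 - m), bb n (m + 1 + i - 1) x - bb n (m + 1 + i) x
        = bb n (m + i) x - bb n (m + (i + 1)) x := by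
      intro i _
      congr 2 <;> omega
    rw [Finset.sum_congr rfl this, Finset.sum_range_sub' (fun i => bb n (m + i) x)]
    have h2 : m + (n + 1 - m) = n + 1 := by omega
    rw [Nat.add_zero, h2]
    have : bb n (n + 1) x = 0 := by simp [bb, Nat.choose_succ_self]
    rw [this, sub_zero]
  rwa [hsum] at h

lemma hasDerivAt_FF (f : ℝ → ℝ) (n : ℕ) (x : ℝ) :
    HasDerivAt (FF f n) (bern f n x) x := by
  have h := HasDerivAt.fun_sum (u := Finset.range (n + 1))
    (fun m hm => (hasDerivAt_inner n m (by simp at hm; omega) x).const_mul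
      (f ((m : ℝ) / (n : ℝ)) / ((n : ℝ) + 1)))
  have he : ∑ m ∈ Finset.range (n + 1),
      f ((m : ℝ) / (n : ℝ)) / ((n : ℝ) + 1) * bb n m x = bern f n x := by
    refine Finset.sum_congr rfl fun m _ => ?_
    have hne : ((n : ℝ) + 1) ≠ 0 := by positivity
    simp only [bb]
    field_simp
  rwa [he] at h

lemma bern_continuous (f : ℝ → ℝ) (n : ℕ) : Continuous (bern f n) := by
  unfold bern
  exact continuous_finset_sum _ fun m _ => by fun_prop

/-- If `Q k` is the quotient of `F_k(x) - F_k(c)` by `x - c` (with `Q k c = f_k(c)`),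
then `‖Q_m - Q_n‖ ≤ ‖f_m - f_n‖` on `[0,1]`. -/
theorem sup_abs_Q_sub_le (f : ℝ → ℝ) (hf : ContinuousOn f (Set.Icc 0 1))
    (c : ℝ) (hc : c ∈ Set.Ioo (0 : ℝ) 1) (Q : ℕ → ℝ → ℝ)
    (hQ : ∀ k, 1 ≤ k → ∀ x : ℝ, FF f k x - FF f k c = Q k x * (x - c))
    (hQc : ∀ k, 1 ≤ k → Q k c = bern f k c)
    (m n : ℕ) (hm : 1 ≤ m) (hn : 1 ≤ n) :
    (⨆ x : Set.Icc (0 : ℝ) 1, |Q m x - Q n x|) ≤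
      ⨆ x : Set.Icc (0 : ℝ) 1, |bern f m x - bern f n x| := by
  obtain ⟨hc0, hc1⟩ := hc
  set g : ℝ → ℝ := fun y => bern f m y - bern f n y with hg
  set G : ℝ → ℝ := fun y => FF f m y - FF f n y with hG
  have hGd : ∀ y : ℝ, HasDerivAt G (g y) y := fun y =>
    (hasDerivAt_FF f m y).sub (hasDerivAt_FF f n y)
  have hgc : Continuous g := (bern_continuous f m).sub (bern_continuous f n)
  -- key: for each x in [0,1], Q m x - Q n x equals g ξ for some ξ in [0,1]
  have key : ∀ x ∈ Set.Icc (0 : ℝ) 1, ∃ ξ ∈ Set.Icc (0 : ℝ) 1,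
      Q m x - Q n x = g ξ := by
    intro x hx
    rcases lt_trichotomy x c with hlt | heq | hgt
    · obtain ⟨ξ, hξ, hval⟩ := exists_hasDerivAt_eq_slope G g hlt
        (fun y _ => (hGd y).continuousAt.continuousWithinAt) (fun y _ => hGd y)
      refine ⟨ξ, ⟨le_trans hx.1 hξ.1.le, le_trans hξ.2.le hc1.le⟩, ?_⟩
      have h1 : G x - G c = (Q m x - Q n x) * (x - c) := by
        have := hQ m hm x; have := hQ n hn x
        simp only [hG]; linarith
      have hxc : x - c ≠ 0 := by intro h; linarith [sub_eq_zero.1 h]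
      have h2 : Q m x - Q n x = (G x - G c) / (x - c) := (eq_div_iff hxc).2 h1.symm
      rw [h2, hval, ← neg_div_neg_eq, neg_sub, neg_sub]
    · exact ⟨c, ⟨hc0.le, hc1.le⟩, by rw [heq, hQc m hm, hQc n hn]⟩
    · obtain ⟨ξ, hξ, hval⟩ := exists_hasDerivAt_eq_slope G g hgt
        (fun y _ => (hGd y).continuousAt.continuousWithinAt) (fun y _ => hGd y)
      refine ⟨ξ, ⟨le_trans hc0.le hξ.1.le, le_trans hξ.2.le hx.2⟩, ?_⟩
      have h1 : G x - G c = (Q m x - Q n x) * (x - c) := by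
        have := hQ m hm x; have := hQ n hn x
        simp only [hG]; linarith
      have hxc : x - c ≠ 0 := by intro h; linarith [sub_eq_zero.1 h]
      have h2 : Q m x - Q n x = (G x - G c) / (x - c) := (eq_div_iff hxc).2 h1.symm
      rw [h2, hval]
  haveI : Nonempty (Set.Icc (0 : ℝ) 1) := ⟨⟨0, by norm_num⟩⟩
  have hbdd : BddAbove (Set.range fun x : Set.Icc (0 : ℝ) 1 => |g x|) := by
    obtain ⟨M, hM⟩ := (isCompact_Icc (a := (0:ℝ)) (b := 1)).bddAbove_image
      (hgc.abs.continuousOn)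
    exact ⟨M, by rintro _ ⟨x, rfl⟩; exact hM (Set.mem_image_of_mem _ x.2)⟩
  refine ciSup_le fun x => ?_
  obtain ⟨ξ, hξ, hval⟩ := key x x.2
  rw [hval]
  exact le_ciSup hbdd ⟨ξ, hξ⟩
end
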